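/- arXiv:1003.5029 — 2 statements merged into one kernel-verified Lean document; each statement's English description precedes it below -/
import Mathlib

section
/- Let ℓ and ℓ₀ be distinct prime numbers, let d ≥ 1, n ≥ 1, and r, u, w̄ be nonnegative integers, and let f be an integer with 1 ≤ f ≤ d; set q = ℓ₀^f, M = max(n·r, w̄/2) (a rational number), and c_n = binomial(n, ⌊n/2⌋). Let s, t₁, …, t_n be nonnegative integers with s ≤ u and 0 ≤ t_k ≤ r·u for every k. Let α₁, …, α_n be algebraic integers in ℂ (elements of the integral closure of ℤ in ℂ) such that the polynomial ∏_{k=1}^n (X − α_k) has rational integer coefficients, and let w₁, …, w_n be nonnegative integers with w₁ + ⋯ + w_n ≤ w̄ and |α_k| = q^{w_k/2} for every k. Let F be an algebraically closed field of characteristic ℓ and let φ be a ring homomorphism from the integral closure of ℤ in ℂ to F. If the multiset {φ(α₁^s), φ(α₂^s), …, φ(α_n^s)} equals the multiset {(q : F)^{t₁}, (q : F)^{t₂}, …, (q : F)^{t_n}} and ℓ > 2·c_n·ℓ₀^{d·M·u} (as real numbers), then the multiset {α₁^s, α₂^s, …, α_n^s} equals the multiset {q^{t₁}, q^{t₂},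 …, q^{t_n}} in ℂ; in particular, the multiset {s·w₁, s·w₂, …, s·w_n} equals the multiset {2·t₁, 2·t₂, …, 2·t_n} of natural numbers. -/
open Polynomial

open MvPolynomial in
lemma aux_cast_eval {S : Type*} [CommRing S] {σ : Type*} (g : σ → ℤ) (p : MvPolynomial σ ℤ) :
    aeval (fun i => (g i : S)) p = ((eval g p : ℤ) : S) := by
  have h := MvPolynomial.eval₂_comp_left (Int.castRingHom S) (RingHom.id ℤ) g p
  simp only [RingHom.comp_id] at h
  rw [MvPolynomial.aeval_def, algebraMap_int_eq,
    show MvPolynomial.eval g p = MvPolynomial.eval₂ (RingHom.id ℤ) g p from rfl]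
  rw [show ((MvPolynomial.eval₂ (RingHom.id ℤ) g p : ℤ) : S)
      = (Int.castRingHom S) (MvPolynomial.eval₂ (RingHom.id ℤ) g p) from rfl, h]
  rfl

open MvPolynomial in
lemma aux_symm_int {n : ℕ} (a : Fin n → ℂ)
    (hco : ∀ j, j ≤ n → ∃ z : ℤ, aeval a (esymm (Fin n) ℤ j) = (z : ℂ))
    (p : MvPolynomial (Fin n) ℤ) (hp : p.IsSymmetric) :
    ∃ z : ℤ, aeval a p = (z : ℂ) := by
  obtain ⟨g, hg⟩ := esymmAlgHom_surjective (σ := Fin n) (R := ℤ) (n := n) (by simp)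
    ⟨p, (mem_symmetricSubalgebra p).2 hp⟩
  have hg' : aeval (fun i : Fin n => esymm (Fin n) ℤ ((i : ℕ) + 1)) g = p := by
    have h2 := congrArg Subtype.val hg
    rwa [esymmAlgHom_apply] at h2
  choose z hz using fun i : Fin n => hco ((i : ℕ) + 1) i.2
  refine ⟨MvPolynomial.eval z g, ?_⟩
  rw [← hg']
  have hcomp := AlgHom.congr_fun
    (MvPolynomial.comp_aeval (φ := MvPolynomial.aeval a)
      (f := fun i : Fin n => esymm (Fin n) ℤ ((i : ℕ) + 1))) g
  rw [AlgHom.comp_apply] at hcomp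
  rw [hcomp]
  simp only [hz]
  exact aux_cast_eval z g

/-- Lemma 2.5 of the paper: if the multiset of reductions mod ℓ of the `s`-th powers
of the Frobenius eigenvalues coincides with a multiset of powers of `q`, and `ℓ` is
large enough, then the equality already holds in `ℂ`, and the multiset of weights is
determined. -/
theorem stmt_0
    (ℓ ℓ₀ : ℕ) (hℓ : ℓ.Prime) (hℓ₀ : ℓ₀.Prime) (hne : ℓ ≠ ℓ₀)
    (d n r u wbar : ℕ) (hd : 1 ≤ d) (hn : 1 ≤ n)
    (f : ℕ) (hf1 : 1 ≤ f) (hfd : f ≤ d)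
    (q : ℕ) (hq : q = ℓ₀ ^ f)
    (M : ℚ) (hM : M = max ((n * r : ℕ) : ℚ) ((wbar : ℚ) / 2))
    (cn : ℕ) (hcn : cn = n.choose (n / 2))
    (s : ℕ) (t : Fin n → ℕ) (hs : s ≤ u) (ht : ∀ k, t k ≤ r * u)
    (α : Fin n → integralClosure ℤ ℂ)
    (hint : ∀ i : ℕ, ∃ z : ℤ, (∏ k, (X - C (α k : ℂ))).coeff i = (z : ℂ))
    (w : Fin n → ℕ) (hw : ∑ k, w k ≤ wbar)
    (habs : ∀ k, ‖(α k : ℂ)‖ = (q : ℝ) ^ ((w k : ℝ) / 2))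
    (F : Type*) [Field F] [IsAlgClosed F] [CharP F ℓ]
    (φ : integralClosure ℤ ℂ →+* F)
    (hmod : Multiset.map (fun k => φ (α k ^ s)) Finset.univ.val
          = Multiset.map (fun k => (q : F) ^ t k) Finset.univ.val)
    (hbig : (ℓ : ℝ) > 2 * cn * (ℓ₀ : ℝ) ^ (((d * M * u : ℚ) : ℝ))) :
    Multiset.map (fun k => (α k : ℂ) ^ s) Finset.univ.val
        = Multiset.map (fun k => (q : ℂ) ^ t k) Finset.univ.val
    ∧ Multiset.map (fun k => s * w k) Finset.univ.val
        = Multiset.map (fun k => 2 * t k) (Finset.univ.val : Multiset (Fin n)) := by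
  have hq2 : (2:ℕ) ≤ q := by
    rw [hq]
    calc 2 ≤ ℓ₀ := hℓ₀.two_le
    _ ≤ ℓ₀ ^ f := Nat.le_self_pow (by omega) _
  have hqR1 : (1:ℝ) < (q:ℝ) := by
    have : (2:ℝ) ≤ (q:ℝ) := by exact_mod_cast hq2
    linarith
  have hqR0 : (0:ℝ) < (q:ℝ) := by linarith
  set a : Fin n → ℂ := fun k => (α k : ℂ) with ha
  set β : Fin n → ℂ := fun k => (α k : ℂ) ^ s with hβ
  set γ : Fin n → ℂ := fun k => (q : ℂ) ^ t k with hγ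
  -- the elementary symmetric functions of the eigenvalues are rational integers
  have hco : ∀ j, j ≤ n →
      ∃ z : ℤ, MvPolynomial.aeval a (MvPolynomial.esymm (Fin n) ℤ j) = (z : ℂ) := by
    intro j hj
    obtain ⟨z, hz⟩ := hint (n - j)
    have hcard : Multiset.card (Finset.univ.val.map a) = n := by simp
    have h1 := Multiset.prod_X_sub_C_coeff (Finset.univ.val.map a) (k := n - j)
      (by rw [hcard]; omega)
    rw [hcard, Nat.sub_sub_self hj] at h1
    have h2 : ((Finset.univ.val.map a).map fun x => X - C x).prod = ∏ k, (X - C (a k)) := by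
      rw [Multiset.map_map, Finset.prod_eq_multiset_prod]
      rfl
    rw [h2] at h1
    have h2' : (∏ k, (X - C (a k))).coeff (n - j) = (z : ℂ) := hz
    rw [h2'] at h1
    refine ⟨(-1)^j * z, ?_⟩
    rw [MvPolynomial.aeval_esymm_eq_multiset_esymm]
    have h3 : ((-1:ℂ))^j * ((-1:ℂ))^j = 1 := by
      rw [← mul_pow]; simp
    push_cast
    calc (Finset.univ.val.map a).esymm j
        = ((-1:ℂ)^j * (-1:ℂ)^j) * (Finset.univ.val.map a).esymm j := by rw [h3, one_mul]
    _ = (-1:ℂ)^j * ((-1:ℂ)^j * (Finset.univ.val.map a).esymm j) := by ring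
    _ = (-1:ℂ)^j * (z:ℂ) := by rw [← h1]
  -- the elementary symmetric functions of the powers are rational integers
  have hbex : ∀ j, ∃ b : ℤ, (b:ℂ) = (Finset.univ.val.map β).esymm j := by
    intro j
    have hp : (MvPolynomial.bind₁
        (fun i : Fin n => (MvPolynomial.X i ^ s : MvPolynomial (Fin n) ℤ))
        (MvPolynomial.esymm (Fin n) ℤ j)).IsSymmetric := by
      intro e
      rw [MvPolynomial.rename_bind₁]
      have h4 : (fun i : Fin n =>
            MvPolynomial.rename e ((MvPolynomial.X i : MvPolynomial (Fin n) ℤ) ^ s))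
          = (fun i : Fin n => (MvPolynomial.X i : MvPolynomial (Fin n) ℤ) ^ s) ∘ e := by
        funext i; simp [Function.comp]
      rw [h4, ← MvPolynomial.bind₁_rename, MvPolynomial.esymm_isSymmetric _ _ _ e]
    obtain ⟨b, hb⟩ := aux_symm_int a hco _ hp
    refine ⟨b, ?_⟩
    rw [MvPolynomial.aeval_bind₁] at hb
    simp only [map_pow, MvPolynomial.aeval_X] at hb
    have e1 := MvPolynomial.aeval_esymm_eq_multiset_esymm (σ := Fin n) (R := ℤ) (S := ℂ) j β
    rw [← e1, ← hb]
  set c : ℕ → ℤ := fun j =>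
    MvPolynomial.eval (fun k : Fin n => (q:ℤ) ^ t k) (MvPolynomial.esymm (Fin n) ℤ j) with hcdef
  have hcC : ∀ j, ((c j : ℤ) : ℂ) = (Finset.univ.val.map γ).esymm j := by
    intro j
    have e1 := MvPolynomial.aeval_esymm_eq_multiset_esymm (σ := Fin n) (R := ℤ) (S := ℂ) j γ
    have e2 := aux_cast_eval (S := ℂ) (fun k : Fin n => (q:ℤ)^t k)
      (MvPolynomial.esymm (Fin n) ℤ j)
    have hfun : (fun i : Fin n => (((q:ℤ) ^ t i : ℤ) : ℂ)) = γ := by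
      funext k
      rw [hγ]
      push_cast
      ring
    rw [hfun] at e2
    rw [← e1, ← e2]
  have hcF : ∀ j, ((c j : ℤ) : F)
      = (Finset.univ.val.map (fun k => (q:F) ^ t k)).esymm j := by
    intro j
    have e1 := MvPolynomial.aeval_esymm_eq_multiset_esymm (σ := Fin n) (R := ℤ) (S := F) j
      (fun k => (q:F) ^ t k)
    have e2 := aux_cast_eval (S := F) (fun k : Fin n => (q:ℤ)^t k)
      (MvPolynomial.esymm (Fin n) ℤ j)
    have hfun : (fun i : Fin n => (((q:ℤ) ^ t i : ℤ) : F)) = (fun k : Fin n => (q:F) ^ t k) := by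
      funext k
      push_cast
      ring
    rw [hfun] at e2
    rw [← e1, ← e2]
  -- transfer b to F via φ
  have hbF : ∀ j, ∀ b : ℤ, (b:ℂ) = (Finset.univ.val.map β).esymm j →
      (b : F) = (Finset.univ.val.map (fun k => φ (α k ^ s))).esymm j := by
    intro j b hb
    set EA : integralClosure ℤ ℂ :=
      MvPolynomial.aeval (fun k => α k ^ s) (MvPolynomial.esymm (Fin n) ℤ j) with hEA
    have h1 : (EA : ℂ) = (Finset.univ.val.map β).esymm j := by
      have h5 := AlgHom.congr_fun
        (MvPolynomial.comp_aeval (φ := (integralClosure ℤ ℂ).val)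
          (f := fun k : Fin n => α k ^ s)) (MvPolynomial.esymm (Fin n) ℤ j)
      rw [AlgHom.comp_apply] at h5
      have e1 := MvPolynomial.aeval_esymm_eq_multiset_esymm (σ := Fin n) (R := ℤ) (S := ℂ) j β
      rw [show ((EA : ℂ)) = (integralClosure ℤ ℂ).val EA from rfl, hEA, h5, ← e1]
      have hfun : (fun i : Fin n => (integralClosure ℤ ℂ).val (α i ^ s)) = β := by
        funext k
        rw [hβ]
        simp
      rw [hfun]
    have h2 : EA = ((b : ℤ) : integralClosure ℤ ℂ) := by
      apply Subtype.coe_injective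
      show (EA : ℂ) = (((b : ℤ) : integralClosure ℤ ℂ) : ℂ)
      rw [h1, ← hb]
      simp
    have h3 : φ EA = (b : F) := by rw [h2, map_intCast]
    have h4 : φ EA = MvPolynomial.aeval (fun k => φ (α k ^ s))
        (MvPolynomial.esymm (Fin n) ℤ j) := by
      have h5 := AlgHom.congr_fun
        (MvPolynomial.comp_aeval (φ := φ.toIntAlgHom)
          (f := fun k : Fin n => α k ^ s)) (MvPolynomial.esymm (Fin n) ℤ j)
      rw [AlgHom.comp_apply] at h5
      exact h5
    rw [← h3, h4, MvPolynomial.aeval_esymm_eq_multiset_esymm]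
  -- bounds
  set L : ℝ := (ℓ₀ : ℝ) ^ (((d * M * u : ℚ) : ℝ)) with hLdef
  have hℓ₀1 : (1:ℝ) ≤ (ℓ₀:ℝ) := by
    have := hℓ₀.two_le
    have : (2:ℝ) ≤ (ℓ₀:ℝ) := by exact_mod_cast this
    linarith
  have hL0 : (0:ℝ) ≤ L := Real.rpow_nonneg (by linarith) _
  have hMcast : ((d * M * u : ℚ) : ℝ) = (d:ℝ) * (M:ℝ) * u := by push_cast; ring
  have hM1 : ((n:ℝ) * r) ≤ (M:ℝ) := by
    have h6 : ((n * r : ℕ) : ℚ) ≤ M := hM ▸ le_max_left _ _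
    have h7 : (((n * r : ℕ) : ℚ) : ℝ) ≤ ((M:ℚ):ℝ) := by exact_mod_cast h6
    push_cast at h7
    convert h7 using 2
  have hM2 : (wbar:ℝ)/2 ≤ (M:ℝ) := by
    have h6 : ((wbar : ℚ))/2 ≤ M := hM ▸ le_max_right _ _
    have h7 : (((wbar : ℚ) / 2 : ℚ) : ℝ) ≤ ((M:ℚ):ℝ) := by exact_mod_cast h6
    push_cast at h7
    convert h7 using 2
  have habsβ : ∀ k, ‖β k‖ = (q:ℝ) ^ (((s * w k : ℕ) : ℝ)/2) := by
    intro k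
    rw [hβ, norm_pow, habs k, ← Real.rpow_natCast ((q:ℝ) ^ ((w k : ℝ)/2)) s,
      ← Real.rpow_mul hqR0.le]
    congr 1
    push_cast
    ring
  have hprodβ : ∀ S : Finset (Fin n), ‖∏ k ∈ S, β k‖ ≤ L := by
    intro S
    rw [norm_prod]
    calc ∏ k ∈ S, ‖β k‖
        = ∏ k ∈ S, (q:ℝ) ^ (((s * w k : ℕ) : ℝ)/2) := by
          exact Finset.prod_congr rfl fun k _ => habsβ k
    _ = (q:ℝ) ^ (∑ k ∈ S, ((s * w k : ℕ) : ℝ)/2) := (Real.rpow_sum_of_pos hqR0 _ S).symm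
    _ ≤ L := by
        rw [hq, Nat.cast_pow]
        rw [← Real.rpow_natCast (ℓ₀:ℝ) f, ← Real.rpow_mul (by linarith)]
        apply Real.rpow_le_rpow_of_exponent_le hℓ₀1
        rw [hMcast]
        have hW : ∑ k ∈ S, ((w k : ℝ)) ≤ (wbar:ℝ) := by
          calc ∑ k ∈ S, (w k:ℝ) ≤ ∑ k, (w k:ℝ) :=
              Finset.sum_le_sum_of_subset_of_nonneg (Finset.subset_univ S)
                (fun k _ _ => by positivity)
          _ ≤ (wbar:ℝ) := by exact_mod_cast hw
        have hW0 : (0:ℝ) ≤ ∑ k ∈ S, ((w k : ℝ)) := by positivity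
        have hsum : ∑ k ∈ S, ((s * w k : ℕ) : ℝ)/2 = (s:ℝ) * (∑ k ∈ S, (w k:ℝ)) / 2 := by
          rw [Finset.mul_sum, Finset.sum_div]
          exact Finset.sum_congr rfl fun k _ => by push_cast; ring
        rw [hsum]
        have hs' : (s:ℝ) ≤ (u:ℝ) := by exact_mod_cast hs
        have hfd' : (f:ℝ) ≤ (d:ℝ) := by exact_mod_cast hfd
        have h8 : (s:ℝ) * (∑ k ∈ S, (w k:ℝ)) / 2 ≤ (u:ℝ) * (M:ℝ) := by
          have h9 : (s:ℝ) * (∑ k ∈ S, (w k:ℝ)) ≤ (u:ℝ) * (wbar:ℝ) :=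
            mul_le_mul hs' hW hW0 (by positivity)
          calc (s:ℝ) * (∑ k ∈ S, (w k:ℝ)) / 2 ≤ (u:ℝ) * (wbar:ℝ) / 2 := by linarith
          _ = (u:ℝ) * ((wbar:ℝ)/2) := by ring
          _ ≤ (u:ℝ) * (M:ℝ) := by
              apply mul_le_mul_of_nonneg_left hM2 (by positivity)
        calc (f:ℝ) * ((s:ℝ) * (∑ k ∈ S, (w k:ℝ)) / 2)
            ≤ (d:ℝ) * ((s:ℝ) * (∑ k ∈ S, (w k:ℝ)) / 2) :=
              mul_le_mul_of_nonneg_right hfd' (by positivity)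
        _ ≤ (d:ℝ) * ((u:ℝ) * (M:ℝ)) := mul_le_mul_of_nonneg_left h8 (by positivity)
        _ = (d:ℝ) * (M:ℝ) * (u:ℝ) := by ring
  have habsγ : ∀ k, ‖γ k‖ = (q:ℝ) ^ (t k) := by
    intro k
    rw [hγ, norm_pow, Complex.norm_natCast]
  have hprodγ : ∀ S : Finset (Fin n), ‖∏ k ∈ S, γ k‖ ≤ L := by
    intro S
    rw [norm_prod]
    calc ∏ k ∈ S, ‖γ k‖
        = ∏ k ∈ S, (q:ℝ) ^ (t k) := Finset.prod_congr rfl fun k _ => habsγ k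
    _ = (q:ℝ) ^ (∑ k ∈ S, t k) := by rw [← Finset.prod_pow_eq_pow_sum]
    _ ≤ L := by
        rw [hq, Nat.cast_pow]
        rw [← pow_mul, ← Real.rpow_natCast (ℓ₀:ℝ) (f * ∑ k ∈ S, t k)]
        apply Real.rpow_le_rpow_of_exponent_le hℓ₀1
        rw [hMcast]
        have hT : ∑ k ∈ S, t k ≤ n * (r * u) := by
          calc ∑ k ∈ S, t k ≤ S.card * (r * u) := by
                have := Finset.sum_le_card_nsmul S t (r*u) (fun k _ => ht k)
                simpa using this
          _ ≤ n * (r * u) := by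
              have hSc : S.card ≤ n := by
                have := Finset.card_le_univ S
                simpa using this
              exact Nat.mul_le_mul_right _ hSc
        have hT' : ((f * ∑ k ∈ S, t k : ℕ) : ℝ) ≤ (d:ℝ) * ((n:ℝ) * (r:ℝ) * (u:ℝ)) := by
          have : (f * ∑ k ∈ S, t k : ℕ) ≤ d * (n * (r * u)) :=
            Nat.mul_le_mul hfd hT
          calc ((f * ∑ k ∈ S, t k : ℕ) : ℝ) ≤ ((d * (n * (r * u)) : ℕ) : ℝ) := by
                exact_mod_cast this
          _ = (d:ℝ) * ((n:ℝ) * (r:ℝ) * (u:ℝ)) := by push_cast; ring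
        calc ((f * ∑ k ∈ S, t k : ℕ) : ℝ) ≤ (d:ℝ) * ((n:ℝ) * (r:ℝ) * (u:ℝ)) := hT'
        _ = (d:ℝ) * ((n:ℝ) * (r:ℝ)) * (u:ℝ) := by ring
        _ ≤ (d:ℝ) * (M:ℝ) * (u:ℝ) := by
            apply mul_le_mul_of_nonneg_right _ (by positivity)
            exact mul_le_mul_of_nonneg_left hM1 (by positivity)
  -- bound on elementary symmetric functions
  have hes : ∀ (v : Fin n → ℂ), (∀ S : Finset (Fin n), ‖∏ k ∈ S, v k‖ ≤ L) →
      ∀ j, ‖(Finset.univ.val.map v).esymm j‖ ≤ (cn:ℝ) * L := by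
    intro v hv j
    rw [Finset.esymm_map_val]
    calc ‖∑ S ∈ Finset.powersetCard j Finset.univ, ∏ k ∈ S, v k‖
        ≤ ∑ S ∈ Finset.powersetCard j Finset.univ, ‖∏ k ∈ S, v k‖ :=
          norm_sum_le _ _
    _ ≤ ∑ _S ∈ Finset.powersetCard j Finset.univ, L :=
          Finset.sum_le_sum (fun S _ => hv S)
    _ = ((Finset.powersetCard j (Finset.univ : Finset (Fin n))).card : ℝ) * L := by
          rw [Finset.sum_const, nsmul_eq_mul]
    _ ≤ (cn:ℝ) * L := by
          apply mul_le_mul_of_nonneg_right _ hL0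
          have : (Finset.powersetCard j (Finset.univ : Finset (Fin n))).card ≤ cn := by
            rw [Finset.card_powersetCard, Finset.card_univ, Fintype.card_fin, hcn]
            exact Nat.choose_le_middle j n
          exact_mod_cast this
  -- equality of the symmetric functions
  have hbc : ∀ j, (Finset.univ.val.map β).esymm j = (Finset.univ.val.map γ).esymm j := by
    intro j
    obtain ⟨b, hb⟩ := hbex j
    have hbF' := hbF j b hb
    have hdvd : (ℓ:ℤ) ∣ (b - c j) := by
      have h10 : ((b - c j : ℤ) : F) = 0 := by
        push_cast
        rw [hbF', hcF j, hmod, sub_self]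
      exact (CharP.intCast_eq_zero_iff F ℓ _).1 h10
    have hbbound := hes β hprodβ j
    have hcbound := hes γ hprodγ j
    rw [← hb, Complex.norm_intCast] at hbbound
    rw [← hcC j, Complex.norm_intCast] at hcbound
    have hzero : b - c j = 0 := by
      by_contra h0
      have h2 : (ℓ:ℤ) ≤ |b - c j| :=
        Int.le_of_dvd (abs_pos.2 h0) ((dvd_abs _ _).2 hdvd)
      have h3 : ((ℓ:ℝ)) ≤ |((b - c j : ℤ) : ℝ)| := by
        rw [← Int.cast_abs]
        exact_mod_cast h2
      have h4 : |((b - c j : ℤ) : ℝ)| ≤ 2 * (cn:ℝ) * L := by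
        push_cast
        calc |(b:ℝ) - (c j:ℝ)| ≤ |(b:ℝ)| + |(c j:ℝ)| := abs_sub _ _
        _ ≤ (cn:ℝ) * L + (cn:ℝ) * L := add_le_add hbbound hcbound
        _ = 2 * (cn:ℝ) * L := by ring
      linarith [hbig]
    have h11 : b = c j := by omega
    rw [← hb, ← hcC j, h11]
  -- polynomial equality
  have hcards : Multiset.card (Finset.univ.val.map β) = n := by simp
  have hcardt : Multiset.card (Finset.univ.val.map γ) = n := by simp
  have hpoly : ((Finset.univ.val.map β).map fun x => X - C x).prod
      = ((Finset.univ.val.map γ).map fun x => X - C x).prod := by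
    apply Polynomial.ext
    intro i
    rcases le_or_gt i n with hi | hi
    · rw [Multiset.prod_X_sub_C_coeff _ (by rw [hcards]; exact hi),
        Multiset.prod_X_sub_C_coeff _ (by rw [hcardt]; exact hi),
        hcards, hcardt, hbc (n - i)]
    · have h1 : (((Finset.univ.val.map β).map fun x => X - C x).prod).natDegree = n := by
        rw [Polynomial.natDegree_multiset_prod_X_sub_C_eq_card, hcards]
      have h2 : (((Finset.univ.val.map γ).map fun x => X - C x).prod).natDegree = n := by
        rw [Polynomial.natDegree_multiset_prod_X_sub_C_eq_card, hcardt]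
      rw [Polynomial.coeff_eq_zero_of_natDegree_lt (by rw [h1]; exact hi),
        Polynomial.coeff_eq_zero_of_natDegree_lt (by rw [h2]; exact hi)]
  have part1 : Multiset.map β Finset.univ.val = Multiset.map γ Finset.univ.val := by
    have hr1 := Polynomial.roots_multiset_prod_X_sub_C (Finset.univ.val.map β)
    have hr2 := Polynomial.roots_multiset_prod_X_sub_C (Finset.univ.val.map γ)
    rw [← hr1, ← hr2, hpoly]
  -- part 2 : weights
  have habs2 : Multiset.map (fun k => ‖β k‖) Finset.univ.val
      = Multiset.map (fun k => ‖γ k‖) Finset.univ.val := by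
    have h12 := congrArg (Multiset.map (fun x : ℂ => ‖x‖)) part1
    rw [Multiset.map_map, Multiset.map_map] at h12
    exact h12
  have hginj : Function.Injective (fun m : ℕ => (q:ℝ) ^ ((m:ℝ)/2)) := by
    intro m1 m2 h
    have hmono : StrictMono (fun y : ℝ => (q:ℝ) ^ y) :=
      fun x y hxy => (Real.rpow_lt_rpow_left_iff hqR1).2 hxy
    have h13 := hmono.injective h
    have h14 : (m1:ℝ) = (m2:ℝ) := by linarith
    exact_mod_cast h14
  have hmap1 : Multiset.map (fun k => ‖β k‖) Finset.univ.val
      = Multiset.map ((fun m : ℕ => (q:ℝ) ^ ((m:ℝ)/2)) ∘ (fun k => s * w k))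
          Finset.univ.val := by
    apply Multiset.map_congr rfl
    intro k _
    rw [Function.comp_apply, habsβ k]
  have hmap2 : Multiset.map (fun k => ‖γ k‖) Finset.univ.val
      = Multiset.map ((fun m : ℕ => (q:ℝ) ^ ((m:ℝ)/2)) ∘ (fun k => 2 * t k))
          Finset.univ.val := by
    apply Multiset.map_congr rfl
    intro k _
    rw [Function.comp_apply, habsγ k, ← Real.rpow_natCast ((q:ℝ)) (t k)]
    congr 1
    push_cast
    ring
  have hfin : Multiset.map (fun m : ℕ => (q:ℝ) ^ ((m:ℝ)/2))
        (Multiset.map (fun k => s * w k) Finset.univ.val)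
      = Multiset.map (fun m : ℕ => (q:ℝ) ^ ((m:ℝ)/2))
        (Multiset.map (fun k => 2 * t k) Finset.univ.val) := by
    rw [Multiset.map_map, Multiset.map_map, ← hmap1, ← hmap2]
    exact habs2
  exact ⟨part1, Multiset.map_injective hginj hfin⟩
end

section
/- Let ℓ be a prime number, let V be a nonzero finite-dimensional vector space over 𝔽_ℓ of dimension n, let G be a group, let ρ : G → GL(V) be a group homomorphism, and let χ : G → 𝔽_ℓ^× be a group homomorphism whose kernel N satisfies: the image ρ(N) is an ℓ-group. Then V admits a filtration of G-stable subspaces {0} = V₀ ⊂ V₁ ⊂ ⋯ ⊂ V_{n−1} ⊂ V_n = V such that V_k has dimension k for each 1 ≤ k ≤ n, and for each 1 ≤ k ≤ n there exists an integer a_k with 0 ≤ a_k < |χ(G)| such that for all g ∈ G and v ∈ V_k one has ρ(g)v − χ(g)^{a_k}·v ∈ V_{k−1} (i.e., G acts on the quotient V_k/V_{k−1} through the character χ^{a_k}). -/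
open Module Polynomial

/-- A finite `ℓ`-group of linear automorphisms of a nonzero `𝔽_ℓ`-vector space has a
nonzero fixed vector. -/
private lemma rt_exists_fixed (ℓ : ℕ) [Fact ℓ.Prime]
    (V : Type*) [AddCommGroup V] [Module (ZMod ℓ) V] [FiniteDimensional (ZMod ℓ) V]
    (hpos : 0 < Module.finrank (ZMod ℓ) V)
    {G : Type*} [Group G]
    (ρ : G →* (Module.End (ZMod ℓ) V)ˣ) (χ : G →* (ZMod ℓ)ˣ)
    (hN : IsPGroup ℓ (Subgroup.map ρ χ.ker)) :
    ∃ v : V, v ≠ 0 ∧ ∀ g ∈ χ.ker, (ρ g : Module.End (ZMod ℓ) V) v = v := by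
  haveI : Finite V := Module.finite_of_finite (ZMod ℓ)
  haveI : Fintype V := Fintype.ofFinite V
  set P := Subgroup.map ρ χ.ker with hP
  have hmod := hN.card_modEq_card_fixedPoints V
  have hcardV : Nat.card V = ℓ ^ Module.finrank (ZMod ℓ) V := by
    rw [Nat.card_eq_fintype_card, card_eq_pow_finrank (K := ZMod ℓ), ZMod.card]
  have hdvdV : ℓ ∣ Nat.card V := hcardV ▸ dvd_pow_self ℓ hpos.ne'
  have hdvd : ℓ ∣ Nat.card (MulAction.fixedPoints P V) :=
    (Nat.modEq_zero_iff_dvd).mp (hmod.symm.trans (Nat.modEq_zero_iff_dvd.mpr hdvdV))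
  have h0 : (0 : V) ∈ MulAction.fixedPoints P V := fun p => smul_zero _
  haveI : Nonempty (MulAction.fixedPoints P V) := ⟨⟨0, h0⟩⟩
  have hpos2 : 0 < Nat.card (MulAction.fixedPoints P V) := Nat.card_pos
  have hlt : 1 < Nat.card (MulAction.fixedPoints P V) :=
    lt_of_lt_of_le (Fact.out : ℓ.Prime).one_lt (Nat.le_of_dvd hpos2 hdvd)
  haveI : Fintype (MulAction.fixedPoints P V) := Fintype.ofFinite _
  rw [Nat.card_eq_fintype_card] at hlt
  haveI := Fintype.one_lt_card_iff_nontrivial.mp hlt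
  obtain ⟨w, hw⟩ := exists_ne (⟨0, h0⟩ : MulAction.fixedPoints P V)
  refine ⟨(w : V), fun h => hw (Subtype.ext h), ?_⟩
  intro g hg
  exact w.2 ⟨ρ g, Subgroup.mem_map_of_mem ρ hg⟩

/-- Existence of a common eigenvector, with eigencharacter a power of `χ`. -/
private lemma rt_exists_eigenvector (ℓ : ℕ) [Fact ℓ.Prime]
    (V : Type*) [AddCommGroup V] [Module (ZMod ℓ) V] [FiniteDimensional (ZMod ℓ) V]
    (hpos : 0 < Module.finrank (ZMod ℓ) V)
    {G : Type*} [Group G]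
    (ρ : G →* (Module.End (ZMod ℓ) V)ˣ) (χ : G →* (ZMod ℓ)ˣ)
    (hN : IsPGroup ℓ (Subgroup.map ρ χ.ker)) :
    ∃ v : V, v ≠ 0 ∧ ∃ a : ℕ, a < Nat.card χ.range ∧
      ∀ g : G, (ρ g : Module.End (ZMod ℓ) V) v = ((χ g : ZMod ℓ) ^ a) • v := by
  classical
  have key : ∀ g₁ g₂ : G, ∀ x : V,
      (ρ (g₁ * g₂) : Module.End (ZMod ℓ) V) x
        = (ρ g₁ : Module.End (ZMod ℓ) V) ((ρ g₂ : Module.End (ZMod ℓ) V) x) := by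
    intro g₁ g₂ x
    rw [map_mul, Units.val_mul]
    rfl
  set m := Nat.card χ.range with hm
  have hm0 : 0 < m := Nat.card_pos
  obtain ⟨ζ, hζ⟩ := IsCyclic.exists_generator (α := χ.range)
  have hζm : ζ ^ m = 1 := pow_card_eq_one'
  have hgen : ∀ x : χ.range, ∃ k : ℕ, k < m ∧ ζ ^ k = x := by
    intro x
    obtain ⟨j, hj⟩ := hζ x
    have hmZ : (0 : ℤ) < (m : ℤ) := by exact_mod_cast hm0
    have h1 : 0 ≤ j % (m : ℤ) := Int.emod_nonneg j hmZ.ne'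
    have h2 : j % (m : ℤ) < (m : ℤ) := Int.emod_lt_of_pos j hmZ
    refine ⟨(j % (m : ℤ)).toNat, by omega, ?_⟩
    have h3 : ζ ^ ((j % (m : ℤ)).toNat : ℤ) = ζ ^ j := by
      rw [Int.toNat_of_nonneg h1]
      conv_rhs => rw [← Int.emod_add_mul_ediv j (m : ℤ)]
      rw [zpow_add, zpow_mul, zpow_natCast, hζm, one_zpow, mul_one]
    rw [← zpow_natCast, h3]
    exact hj
  obtain ⟨g₀, hg₀⟩ := MonoidHom.mem_range.mp ζ.2
  -- the fixed space of the kernel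
  let Wfix : Submodule (ZMod ℓ) V :=
    { carrier := {v | ∀ g ∈ χ.ker, (ρ g : Module.End (ZMod ℓ) V) v = v}
      add_mem' := fun {x y} hx hy g hg => by
        simp only [map_add, hx g hg, hy g hg]
      zero_mem' := fun g hg => map_zero _
      smul_mem' := fun c v hv g hg => by
        simp only [map_smul, hv g hg] }
  obtain ⟨v₁, hv₁0, hv₁⟩ := rt_exists_fixed ℓ V hpos ρ χ hN
  have hv₁W : v₁ ∈ Wfix := hv₁
  haveI : Nontrivial Wfix := by
    refine nontrivial_of_ne ⟨v₁, hv₁W⟩ 0 ?_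
    intro h
    exact hv₁0 (by simpa using congrArg Subtype.val h)
  have hstab : ∀ g : G, ∀ x ∈ Wfix, (ρ g : Module.End (ZMod ℓ) V) x ∈ Wfix := by
    intro g x hx h hh
    have hker : g⁻¹ * h * g ∈ χ.ker := by
      rw [MonoidHom.mem_ker] at hh ⊢
      rw [map_mul, map_mul, map_inv, hh, mul_one, inv_mul_cancel]
    calc (ρ h : Module.End (ZMod ℓ) V) ((ρ g : Module.End (ZMod ℓ) V) x)
        = (ρ (h * g) : Module.End (ZMod ℓ) V) x := (key h g x).symm
      _ = (ρ (g * (g⁻¹ * h * g)) : Module.End (ZMod ℓ) V) x := by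
          congr 2
          group
      _ = (ρ g : Module.End (ZMod ℓ) V) ((ρ (g⁻¹ * h * g) : Module.End (ZMod ℓ) V) x) :=
          key g _ x
      _ = (ρ g : Module.End (ZMod ℓ) V) x := by rw [hx _ hker]
  let f : Module.End (ZMod ℓ) Wfix := (ρ g₀ : Module.End (ZMod ℓ) V).restrict (hstab g₀)
  have hζmv : ((ζ : (ZMod ℓ)ˣ)) ^ m = 1 := by
    exact_mod_cast congrArg Subtype.val hζm
  have hg₀m : g₀ ^ m ∈ χ.ker := by
    rw [MonoidHom.mem_ker, map_pow, hg₀, hζmv]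
  have hfm : f ^ m = 1 := by
    rw [Module.End.pow_restrict]
    ext x
    have h1 : ((ρ g₀ : Module.End (ZMod ℓ) V) ^ m) (x : V) = (x : V) := by
      rw [← Units.val_pow_eq_pow_val, ← map_pow]
      exact x.2 _ hg₀m
    simpa [LinearMap.restrict_apply] using h1
  have hint : IsIntegral (ZMod ℓ) f :=
    ⟨X ^ m - 1, by simpa using monic_X_pow_sub_C (1 : ZMod ℓ) hm0.ne', by
      simp [map_sub, map_pow, aeval_X, hfm]⟩
  haveI : Nontrivial (Module.End (ZMod ℓ) Wfix) := by
    obtain ⟨w0, hw0⟩ := exists_ne (0 : Wfix)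
    exact nontrivial_of_ne 1 0 fun h => hw0 (by simpa using DFunLike.congr_fun h w0)
  have hdeg : 0 < (minpoly (ZMod ℓ) f).natDegree := minpoly.natDegree_pos hint
  have hdvd1 : minpoly (ZMod ℓ) f ∣ X ^ m - 1 :=
    minpoly.dvd _ _ (by simp [map_sub, map_pow, aeval_X, hfm])
  have hℓ1 : 1 < ℓ := (Fact.out : ℓ.Prime).one_lt
  have hcardu : Nat.card (ZMod ℓ)ˣ = ℓ - 1 := by
    rw [Nat.card_eq_fintype_card, ZMod.card_units ℓ]
  have hmdvd : m ∣ ℓ - 1 := by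
    have h := Subgroup.card_subgroup_dvd_card χ.range
    rwa [hcardu] at h
  obtain ⟨q, hq⟩ := hmdvd
  have hdvd2 : (X ^ m - 1 : (ZMod ℓ)[X]) ∣ X ^ (ℓ - 1) - 1 := by
    have h := sub_dvd_pow_sub_pow (X ^ m : (ZMod ℓ)[X]) 1 q
    rwa [← pow_mul, one_pow, ← hq] at h
  have hdvd3 : (X ^ (ℓ - 1) - 1 : (ZMod ℓ)[X]) ∣ X ^ ℓ - X := by
    refine ⟨X, ?_⟩
    rw [sub_mul, one_mul, ← pow_succ, Nat.sub_add_cancel hℓ1.le]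
  have hXq : Splits (X ^ ℓ - X : (ZMod ℓ)[X]) := by
    rw [splits_iff_card_roots]
    have h := FiniteField.roots_X_pow_card_sub_X (ZMod ℓ)
    rw [ZMod.card] at h
    rw [h, FiniteField.X_pow_card_sub_X_natDegree_eq _ hℓ1]
    simpa using (Finset.card_univ (α := ZMod ℓ)).trans (ZMod.card ℓ)
  have hXqne : (X ^ ℓ - X : (ZMod ℓ)[X]) ≠ 0 := FiniteField.X_pow_card_sub_X_ne_zero _ hℓ1
  have hsplit : Splits (minpoly (ZMod ℓ) f) :=
    hXq.of_dvd hXqne (hdvd1.trans (hdvd2.trans hdvd3))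
  have hdeg' : (minpoly (ZMod ℓ) f).degree ≠ 0 :=
    (natDegree_pos_iff_degree_pos.mp hdeg).ne'
  obtain ⟨lam, hlam⟩ := hsplit.exists_eval_eq_zero hdeg'
  have heigval : Module.End.HasEigenvalue f lam :=
    Module.End.hasEigenvalue_of_isRoot hlam
  obtain ⟨w, hw⟩ := heigval.exists_hasEigenvector
  have hwne : (w : V) ≠ 0 := by
    intro h
    exact hw.right (by exact_mod_cast Subtype.ext h)
  have hlm : lam ^ m = 1 := by
    obtain ⟨c, hc⟩ := hdvd1
    have h := congrArg (Polynomial.eval lam) hc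
    simp only [eval_sub, eval_pow, eval_X, eval_one, eval_mul, hlam, zero_mul] at h
    exact sub_eq_zero.mp h
  have hlam0 : lam * lam ^ (m - 1) = 1 := by
    rw [← pow_succ', Nat.sub_add_cancel hm0]
    exact hlm
  set lamu : (ZMod ℓ)ˣ := Units.mkOfMulEqOne lam (lam ^ (m - 1)) hlam0 with hlamu_def
  have hlamu_val : (lamu : ZMod ℓ) = lam := rfl
  haveI : NeZero m := ⟨hm0.ne'⟩
  have hrange : χ.range = rootsOfUnity m (ZMod ℓ) := by
    have hle : χ.range ≤ rootsOfUnity m (ZMod ℓ) := by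
      intro x hx
      rw [mem_rootsOfUnity]
      have h : (⟨x, hx⟩ : χ.range) ^ m = 1 := pow_card_eq_one'
      simpa using congrArg Subtype.val h
    refine Subgroup.eq_of_le_of_card_ge hle ?_
    have h1 : Nat.card (rootsOfUnity m (ZMod ℓ)) ≤ m := by
      have h := card_rootsOfUnity (k := m) (R := ZMod ℓ)
      exact h
    exact h1
  have hlamu_mem : lamu ∈ χ.range := by
    rw [hrange, mem_rootsOfUnity']
    simpa [hlamu_val] using hlm
  obtain ⟨a, ham, hζa⟩ := hgen ⟨lamu, hlamu_mem⟩
  have hla : (χ g₀ : ZMod ℓ) ^ a = lam := by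
    have h1 : ((ζ : (ZMod ℓ)ˣ)) ^ a = lamu := by
      simpa using congrArg Subtype.val hζa
    rw [hg₀]
    calc ((ζ : (ZMod ℓ)ˣ) : ZMod ℓ) ^ a = ((ζ ^ a : (ZMod ℓ)ˣ) : ZMod ℓ) := by
          rw [Units.val_pow_eq_pow_val]
      _ = lam := by rw [h1, hlamu_val]
  have heig : (ρ g₀ : Module.End (ZMod ℓ) V) (w : V) = lam • (w : V) := by
    have h := hw.apply_eq_smul
    have h2 := congrArg Subtype.val h
    simpa [f, LinearMap.restrict_apply] using h2
  have hpow : ∀ k : ℕ, ((ρ g₀ : Module.End (ZMod ℓ) V) ^ k) (w : V) = lam ^ k • (w : V) := by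
    intro k
    induction k with
    | zero => simp
    | succ k ih =>
      have hstep : ((ρ g₀ : Module.End (ZMod ℓ) V) ^ (k + 1)) (w : V)
          = (ρ g₀ : Module.End (ZMod ℓ) V)
              (((ρ g₀ : Module.End (ZMod ℓ) V) ^ k) (w : V)) := by
        rw [pow_succ', Module.End.mul_apply]
      rw [hstep, ih, map_smul, heig, smul_smul, pow_succ]
  refine ⟨(w : V), hwne, a, ham, ?_⟩
  intro g
  obtain ⟨k, hk, hζk⟩ := hgen ⟨χ g, MonoidHom.mem_range.mpr ⟨g, rfl⟩⟩
  have hχg : (χ g₀) ^ k = χ g := by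
    have h1 : ((ζ : (ZMod ℓ)ˣ)) ^ k = χ g := by
      simpa using congrArg Subtype.val hζk
    rw [hg₀]
    exact h1
  have hker : g * (g₀ ^ k)⁻¹ ∈ χ.ker := by
    rw [MonoidHom.mem_ker, map_mul, map_inv, map_pow, hχg, mul_inv_cancel]
  have hsplitg : g = (g * (g₀ ^ k)⁻¹) * g₀ ^ k := by group
  have hρpow : (ρ (g₀ ^ k) : Module.End (ZMod ℓ) V) (w : V) = lam ^ k • (w : V) := by
    rw [map_pow, Units.val_pow_eq_pow_val]
    exact hpow k
  have hwfix : (w : V) ∈ Wfix := w.2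
  have hfix : (ρ (g * (g₀ ^ k)⁻¹) : Module.End (ZMod ℓ) V) (w : V) = (w : V) :=
    hwfix _ hker
  have hcg : (χ g₀ : ZMod ℓ) ^ k = (χ g : ZMod ℓ) := by
    exact_mod_cast congrArg Units.val hχg
  have hlamk : lam ^ k = (χ g : ZMod ℓ) ^ a := by
    rw [← hla, ← pow_mul, mul_comm, pow_mul, hcg]
  calc (ρ g : Module.End (ZMod ℓ) V) (w : V)
      = (ρ ((g * (g₀ ^ k)⁻¹) * g₀ ^ k) : Module.End (ZMod ℓ) V) (w : V) := by
        rw [← hsplitg]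
    _ = (ρ (g * (g₀ ^ k)⁻¹) : Module.End (ZMod ℓ) V)
          ((ρ (g₀ ^ k) : Module.End (ZMod ℓ) V) (w : V)) := key _ _ _
    _ = (ρ (g * (g₀ ^ k)⁻¹) : Module.End (ZMod ℓ) V) (lam ^ k • (w : V)) := by rw [hρpow]
    _ = lam ^ k • (ρ (g * (g₀ ^ k)⁻¹) : Module.End (ZMod ℓ) V) (w : V) := map_smul _ _ _
    _ = lam ^ k • (w : V) := by rw [hfix]
    _ = ((χ g : ZMod ℓ) ^ a) • (w : V) := by rw [hlamk]

universe u

/-- The main induction. -/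
private theorem rt_aux (ℓ : ℕ) [Fact ℓ.Prime] {G : Type*} [Group G] (χ : G →* (ZMod ℓ)ˣ) :
    ∀ (n : ℕ) (V : Type u) [AddCommGroup V] [Module (ZMod ℓ) V]
      [FiniteDimensional (ZMod ℓ) V],
      Module.finrank (ZMod ℓ) V = n →
      ∀ ρ : G →* (Module.End (ZMod ℓ) V)ˣ, IsPGroup ℓ (Subgroup.map ρ χ.ker) →
      ∃ W : Fin (n + 1) → Submodule (ZMod ℓ) V,
        W 0 = ⊥ ∧ W (Fin.last n) = ⊤ ∧
        (∀ k : Fin n, W k.castSucc ≤ W k.succ) ∧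
        (∀ k : Fin (n + 1), Module.finrank (ZMod ℓ) (W k) = (k : ℕ)) ∧
        (∀ k : Fin (n + 1), ∀ g : G, ∀ v ∈ W k, (ρ g : Module.End (ZMod ℓ) V) v ∈ W k) ∧
        ∃ a : Fin n → ℕ,
          (∀ k, a k < Nat.card χ.range) ∧
          ∀ k : Fin n, ∀ g : G, ∀ v ∈ W k.succ,
            (ρ g : Module.End (ZMod ℓ) V) v - ((χ g : ZMod ℓ) ^ a k) • v ∈ W k.castSucc := by
  intro n
  induction n with
  | zero =>
    intro V _ _ _ hdim ρ hN
    refine ⟨fun _ => ⊥, rfl, ?_, fun k => k.elim0, ?_, ?_, Fin.elim0, fun k => k.elim0,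
      fun k => k.elim0⟩
    · have hall : ∀ x : V, x = 0 := finrank_zero_iff_forall_zero.mp hdim
      refine le_antisymm le_top fun x _ => ?_
      rw [Submodule.mem_bot]
      exact hall x
    · intro k
      have : (k : ℕ) = 0 := by omega
      rw [finrank_bot, this]
    · intro k g v hv
      rw [Submodule.mem_bot] at hv ⊢
      rw [hv, map_zero]
  | succ n IH =>
    intro V _ _ _ hdim ρ hN
    have hpos : 0 < Module.finrank (ZMod ℓ) V := by rw [hdim]; exact n.succ_pos
    obtain ⟨v₀, hv₀0, a₀, ha₀, h₀⟩ := rt_exists_eigenvector ℓ V hpos ρ χ hN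
    set L : Submodule (ZMod ℓ) V := Submodule.span (ZMod ℓ) {v₀} with hLdef
    have hLmem : v₀ ∈ L := Submodule.mem_span_singleton_self v₀
    have hL1 : Module.finrank (ZMod ℓ) L = 1 := finrank_span_singleton hv₀0
    have hLstab : ∀ g : G, L ≤ Submodule.comap (ρ g : Module.End (ZMod ℓ) V) L := by
      intro g x hx
      obtain ⟨c, rfl⟩ := Submodule.mem_span_singleton.mp hx
      rw [Submodule.mem_comap, map_smul, h₀ g]
      exact Submodule.smul_mem _ _ (Submodule.smul_mem _ _ hLmem)
    have hQdim : Module.finrank (ZMod ℓ) (V ⧸ L) = n := by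
      have h := Submodule.finrank_quotient_add_finrank L
      rw [hL1, hdim] at h
      omega
    let ρE : G → Module.End (ZMod ℓ) (V ⧸ L) :=
      fun g => Submodule.mapQ L L (ρ g : Module.End (ZMod ℓ) V) (hLstab g)
    have hcomm : ∀ (g : G) (x : V),
        ρE g (L.mkQ x) = L.mkQ ((ρ g : Module.End (ZMod ℓ) V) x) := by
      intro g x
      simp [ρE, Submodule.mkQ_apply, Submodule.mapQ_apply]
    have hρE_mul : ∀ g h : G, ρE (g * h) = ρE g * ρE h := by
      intro g h
      apply Submodule.linearMap_qext
      ext x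
      simp only [LinearMap.comp_apply, Submodule.mkQ_apply, Submodule.mapQ_apply, ρE,
        Module.End.mul_apply]
      rw [map_mul, Units.val_mul]
      rfl
    have hρE_one : ρE 1 = 1 := by
      apply Submodule.linearMap_qext
      ext x
      simp [ρE, Submodule.mkQ_apply, Submodule.mapQ_apply]
    let ρbar : G →* (Module.End (ZMod ℓ) (V ⧸ L))ˣ :=
      { toFun := fun g =>
          ⟨ρE g, ρE g⁻¹,
            by rw [← hρE_mul, mul_inv_cancel]; exact hρE_one,
            by rw [← hρE_mul, inv_mul_cancel]; exact hρE_one⟩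
        map_one' := Units.ext hρE_one
        map_mul' := fun g h => Units.ext (hρE_mul g h) }
    have hρbar_val : ∀ g : G, (ρbar g : Module.End (ZMod ℓ) (V ⧸ L)) = ρE g := fun g => rfl
    have hNbar : IsPGroup ℓ (Subgroup.map ρbar χ.ker) := by
      intro x
      obtain ⟨g, hg, hgx⟩ := Subgroup.mem_map.mp x.2
      obtain ⟨k, hk⟩ := hN ⟨ρ g, Subgroup.mem_map_of_mem ρ hg⟩
      refine ⟨k, ?_⟩
      have hk' : (ρ g) ^ (ℓ ^ k) = 1 := by
        have := congrArg Subtype.val hk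
        simpa using this
      have h1 : ρ (g ^ ℓ ^ k) = 1 := by rw [map_pow, hk']
      have h2 : ρbar (g ^ ℓ ^ k) = 1 := by
        apply Units.ext
        rw [hρbar_val, Units.val_one]
        apply Submodule.linearMap_qext
        ext y
        simp [ρE, Submodule.mkQ_apply, Submodule.mapQ_apply, h1]
      apply Subtype.ext
      have : (x : (Module.End (ZMod ℓ) (V ⧸ L))ˣ) ^ ℓ ^ k = 1 := by
        rw [← hgx, ← map_pow, h2]
      simpa using this
    obtain ⟨Wbar, hW0, hWtop, hWmono, hWrank, hWstab, abar, habound, hacond⟩ :=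
      IH (V ⧸ L) hQdim ρbar hNbar
    refine ⟨fun k => Fin.cases ⊥ (fun i => (Wbar i).comap L.mkQ) k, by simp, ?_, ?_, ?_, ?_,
      Fin.cases a₀ abar, ?_, ?_⟩
    · simp only [← Fin.succ_last, Fin.cases_succ, hWtop, Submodule.comap_top]
    · intro k
      induction k using Fin.cases with
      | zero => simp
      | succ i =>
        simp only [← Fin.succ_castSucc, Fin.cases_succ]
        exact Submodule.comap_mono (hWmono i)
    · intro k
      induction k using Fin.cases with
      | zero => exact finrank_bot (ZMod ℓ) V
      | succ i =>
        simp only [Fin.cases_succ, Fin.val_succ]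
        have hLle : L ≤ (Wbar i).comap L.mkQ := by
          intro x hx
          have hx0 : L.mkQ x = 0 := by
            rw [← LinearMap.mem_ker, Submodule.ker_mkQ]
            exact hx
          rw [Submodule.mem_comap, hx0]
          exact (Wbar i).zero_mem
        set U := (Wbar i).comap L.mkQ with hU
        let φ : U →ₗ[ZMod ℓ] (V ⧸ L) := L.mkQ.comp U.subtype
        have hrange : LinearMap.range φ = Wbar i := by
          rw [LinearMap.range_comp, Submodule.range_subtype]
          exact Submodule.map_comap_eq_of_surjective (Submodule.mkQ_surjective L) _
        have hker : LinearMap.ker φ = Submodule.comap U.subtype L := by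
          ext x
          simp only [LinearMap.mem_ker, LinearMap.comp_apply, Submodule.subtype_apply,
            Submodule.mem_comap, φ, Submodule.mkQ_apply, Submodule.Quotient.mk_eq_zero]
        have h2 : Module.finrank (ZMod ℓ) (LinearMap.ker φ) = 1 := by
          rw [hker, LinearEquiv.finrank_eq (Submodule.comapSubtypeEquivOfLe hLle)]
          exact hL1
        have h3 := LinearMap.finrank_range_add_finrank_ker φ
        rw [LinearEquiv.finrank_eq (LinearEquiv.ofEq _ _ hrange), h2, hWrank i] at h3
        exact h3.symm
    · intro k
      induction k using Fin.cases with
      | zero =>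
        intro g v hv
        simp only [Fin.cases_zero, Submodule.mem_bot] at hv ⊢
        rw [hv, map_zero]
      | succ i =>
        intro g v hv
        simp only [Fin.cases_succ, Submodule.mem_comap] at hv ⊢
        rw [← hcomm g v]
        exact hWstab i g (L.mkQ v) hv
    · intro k
      induction k using Fin.cases with
      | zero => simpa using ha₀
      | succ i => simpa using habound i
    · intro k
      induction k using Fin.cases with
      | zero =>
        intro g v hv
        simp only [Fin.cases_succ, hW0, Submodule.comap_bot, Submodule.ker_mkQ] at hv
        obtain ⟨c, rfl⟩ := Submodule.mem_span_singleton.mp hv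
        simp only [Fin.castSucc_zero, Fin.cases_zero, Submodule.mem_bot]
        rw [map_smul, h₀ g, smul_smul, smul_smul, mul_comm c ((χ g : ZMod ℓ) ^ a₀), sub_self]
      | succ i =>
        intro g v hv
        simp only [Fin.cases_succ] at hv
        rw [Submodule.mem_comap] at hv
        have hmem := hacond i g (L.mkQ v) hv
        simp only [← Fin.succ_castSucc, Fin.cases_succ]
        rw [Submodule.mem_comap, map_sub, map_smul, ← hcomm g v]
        exact hmem

/-- Lemma 3.4 of the paper (Rasmussen–Tamagawa's Lemma): if `ρ(ker χ)` is an
`ℓ`-group, then `V` admits a full flag of `G`-stable subspaces on whose graded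
pieces `G` acts through powers `χ^{a_k}` with `0 ≤ a_k < |χ(G)|`. -/
theorem stmt_1 (ℓ : ℕ) [Fact ℓ.Prime] (n : ℕ) (hn : 0 < n)
    (V : Type*) [AddCommGroup V] [Module (ZMod ℓ) V] [FiniteDimensional (ZMod ℓ) V]
    (hdim : Module.finrank (ZMod ℓ) V = n)
    (G : Type*) [Group G]
    (ρ : G →* (Module.End (ZMod ℓ) V)ˣ)
    (χ : G →* (ZMod ℓ)ˣ)
    (hN : IsPGroup ℓ (Subgroup.map ρ χ.ker)) :
    ∃ W : Fin (n + 1) → Submodule (ZMod ℓ) V,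
      W 0 = ⊥ ∧ W (Fin.last n) = ⊤ ∧
      (∀ k : Fin n, W k.castSucc ≤ W k.succ) ∧
      (∀ k : Fin (n + 1), Module.finrank (ZMod ℓ) (W k) = (k : ℕ)) ∧
      (∀ k : Fin (n + 1), ∀ g : G, ∀ v ∈ W k, (ρ g : Module.End (ZMod ℓ) V) v ∈ W k) ∧
      ∃ a : Fin n → ℕ,
        (∀ k, a k < Nat.card χ.range) ∧
        ∀ k : Fin n, ∀ g : G, ∀ v ∈ W k.succ,
          (ρ g : Module.End (ZMod ℓ) V) v - ((χ g : ZMod ℓ) ^ a k) • v ∈ W k.castSucc := by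
  exact rt_aux ℓ χ n V hdim ρ hN
end
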